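/- Let I : (0,∞) → ℝ be differentiable, nonnegative, and satisfy the Riccati inequality I'(t) + (2/N) I(t)² + 2K I(t) ≤ 0 for all t > 0, where N > 0 and K > 0 are constants. If moreover lim sup_{t→0+} t·I(t) ≤ N/2, then I(t) ≤ N K / (e^{2Kt} − 1) for all t > 0. -/

import Mathlib

open Real Set Filter

/-- If `I ≥ 0` is differentiable on `(0,∞)` and satisfies the Riccati
inequality `I' + (2/N) I² + 2K I ≤ 0` (with `N, K > 0`) and `limsup_{t→0+} t I(t) ≤ N/2`,
then `I(t) ≤ NK/(e^{2Kt} − 1)` for all `t > 0`. -/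
theorem fisher_info_bound_K (I : ℝ → ℝ) (N K : ℝ) (hN : 0 < N) (hK : 0 < K)
    (hd : ∀ t ∈ Ioi (0:ℝ), DifferentiableAt ℝ I t)
    (hnn : ∀ t ∈ Ioi (0:ℝ), 0 ≤ I t)
    (hRic : ∀ t ∈ Ioi (0:ℝ), deriv I t + (2 / N) * (I t) ^ 2 + 2 * K * I t ≤ 0)
    (hlim : Filter.limsup (fun t => t * I t) (nhdsWithin 0 (Ioi 0)) ≤ N / 2) :
    ∀ t ∈ Ioi (0:ℝ), I t ≤ N * K / (Real.exp (2 * K * t) - 1) := by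
  intro t ht
  have ht0 : (0:ℝ) < t := ht
  have hE : 1 < Real.exp (2 * K * t) := by
    have h1 : (0:ℝ) < 2 * K * t := by positivity
    calc (1:ℝ) = Real.exp 0 := by simp
    _ < Real.exp (2 * K * t) := Real.exp_lt_exp.2 h1
  rcases eq_or_lt_of_le (hnn t ht) with h0 | hpos
  · rw [← h0]
    apply div_nonneg (by positivity) (by linarith)
  -- I is antitone on (0, ∞)
  have hanti : AntitoneOn I (Ioi 0) := by
    apply antitoneOn_of_deriv_nonpos (convex_Ioi 0)
    · exact fun s hs => (hd s hs).continuousAt.continuousWithinAt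
    · rw [interior_Ioi]; exact fun s hs => (hd s hs).differentiableWithinAt
    · rw [interior_Ioi]
      intro s hs
      have h1 := hRic s hs
      have h2 : 0 ≤ (2 / N) * (I s) ^ 2 := by positivity
      have h3 : 0 ≤ 2 * K * I s := by
        have := hnn s hs; positivity
      linarith
  have hIpos : ∀ s ∈ Ioc (0:ℝ) t, 0 < I s := by
    intro s hs
    exact lt_of_lt_of_le hpos (hanti hs.1 ht hs.2)
  -- key derivative bound, rewritten without division
  have hNd : ∀ s ∈ Ioc (0:ℝ) t,
      N * deriv I s + 2 * (I s) ^ 2 + 2 * K * N * I s ≤ 0 := by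
    intro s hs
    have hRs := hRic s hs.1
    have h2 : N * (deriv I s + 2 / N * I s ^ 2 + 2 * K * I s) ≤ 0 :=
      mul_nonpos_iff.2 (Or.inl ⟨hN.le, hRs⟩)
    have h3 : N * (2 / N * I s ^ 2) = 2 * I s ^ 2 := by field_simp
    nlinarith [h2, h3]
  -- the auxiliary monotone function h = 1/I - (2/N) s
  set h : ℝ → ℝ := fun s => (I s)⁻¹ - 2 / N * s with hh_def
  have hhderiv : ∀ s ∈ Ioc (0:ℝ) t,
      HasDerivAt h (-(deriv I s) / (I s) ^ 2 - 2 / N * 1) s := by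
    intro s hs
    have hIs := hIpos s hs
    have hinv : HasDerivAt (fun s : ℝ => (I s)⁻¹) (-(deriv I s) / (I s) ^ 2) s :=
      ((hd s hs.1).hasDerivAt).inv (ne_of_gt hIs)
    exact hinv.sub ((hasDerivAt_id s).const_mul (2 / N))
  have hmono_h : MonotoneOn h (Ioc 0 t) := by
    apply monotoneOn_of_deriv_nonneg (convex_Ioc 0 t)
    · exact fun s hs => ((hhderiv s hs).differentiableAt).continuousAt.continuousWithinAt
    · intro s hs
      rw [interior_Ioc] at hs
      exact ((hhderiv s ⟨hs.1, hs.2.le⟩).differentiableAt).differentiableWithinAt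
    · intro s hs
      rw [interior_Ioc] at hs
      have hs' : s ∈ Ioc (0:ℝ) t := ⟨hs.1, hs.2.le⟩
      have hIs := hIpos s hs'
      rw [(hhderiv s hs').deriv]
      have hD := hNd s hs'
      have hIKN : 0 ≤ 2 * K * N * I s := by positivity
      have hrw : -(deriv I s) / (I s) ^ 2 - 2 / N * 1
          = (-(N * deriv I s) - 2 * (I s) ^ 2) / (N * (I s) ^ 2) := by
        field_simp
      rw [hrw]
      apply div_nonneg (by linarith) (by positivity)
  have hne : (nhdsWithin (0:ℝ) (Ioi 0)).NeBot := nhdsGT_neBot 0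
  -- h is nonnegative on (0, t], i.e. 1/I(s) ≥ (2/N) s
  have hub : ∀ s ∈ Ioc (0:ℝ) t, 2 / N * s ≤ (I s)⁻¹ := by
    intro s hs
    have kEy : 0 ≤ h s := by
      have hψ : Tendsto (fun s' : ℝ => -(2 / N * s')) (nhdsWithin (0:ℝ) (Ioi 0)) (nhds 0) := by
        have hc : Continuous (fun s' : ℝ => -(2 / N * s')) :=
          (continuous_const.mul continuous_id).neg
        have h1 := (hc.tendsto 0).mono_left
          (nhdsWithin_le_nhds : nhdsWithin (0:ℝ) (Ioi 0) ≤ nhds 0)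
        simpa using h1
      apply le_of_tendsto hψ
      have hmem : Ioo (0:ℝ) s ∈ nhdsWithin (0:ℝ) (Ioi 0) :=
        Ioo_mem_nhdsGT_of_mem (Set.mem_Ico.2 ⟨le_rfl, hs.1⟩)
      filter_upwards [hmem] with s' hs'
      have hs'' : s' ∈ Ioc (0:ℝ) t := ⟨hs'.1, hs'.2.le.trans hs.2⟩
      have hIs' := hIpos s' hs''
      have hmono := hmono_h hs'' hs hs'.2.le
      have hpos' : 0 < (I s')⁻¹ := by positivity
      simp only [hh_def] at hmono ⊢
      linarith
    simp only [hh_def] at kEy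
    linarith
  -- the main monotone quantity g
  set g : ℝ → ℝ := fun s =>
    Real.exp (-(2 * K * s)) * (I s)⁻¹ - (1 - Real.exp (-(2 * K * s))) * (N * K)⁻¹ with hg_def
  have hgderiv : ∀ s ∈ Ioc (0:ℝ) t,
      HasDerivAt g (Real.exp (-(2 * K * s)) * (-(2 * K)) * (I s)⁻¹
        + Real.exp (-(2 * K * s)) * (-(deriv I s) / (I s) ^ 2)
        - (0 - Real.exp (-(2 * K * s)) * (-(2 * K))) * (N * K)⁻¹) s := by
    intro s hs
    have hIs := hIpos s hs
    have hlin : HasDerivAt (fun s : ℝ => -(2 * K * s)) (-(2 * K)) s := by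
      simpa using ((hasDerivAt_id s).const_mul (2 * K)).fun_neg
    have hexp : HasDerivAt (fun s : ℝ => Real.exp (-(2 * K * s)))
        (Real.exp (-(2 * K * s)) * (-(2 * K))) s := hlin.exp
    have hinv : HasDerivAt (fun s : ℝ => (I s)⁻¹) (-(deriv I s) / (I s) ^ 2) s :=
      ((hd s hs.1).hasDerivAt).inv (ne_of_gt hIs)
    exact ((hexp.mul hinv).sub (((hasDerivAt_const s (1:ℝ)).sub hexp).mul_const ((N * K)⁻¹)))
  have hmono_g : MonotoneOn g (Ioc 0 t) := by
    apply monotoneOn_of_deriv_nonneg (convex_Ioc 0 t)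
    · exact fun s hs => ((hgderiv s hs).differentiableAt).continuousAt.continuousWithinAt
    · intro s hs
      rw [interior_Ioc] at hs
      exact ((hgderiv s ⟨hs.1, hs.2.le⟩).differentiableAt).differentiableWithinAt
    · intro s hs
      rw [interior_Ioc] at hs
      have hs' : s ∈ Ioc (0:ℝ) t := ⟨hs.1, hs.2.le⟩
      have hIs := hIpos s hs'
      rw [(hgderiv s hs').deriv]
      have hD := hNd s hs'
      have hrw : Real.exp (-(2 * K * s)) * (-(2 * K)) * (I s)⁻¹
          + Real.exp (-(2 * K * s)) * (-(deriv I s) / (I s) ^ 2)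
          - (0 - Real.exp (-(2 * K * s)) * (-(2 * K))) * (N * K)⁻¹
          = Real.exp (-(2 * K * s)) *
            ((-(N * deriv I s + 2 * (I s) ^ 2 + 2 * K * N * I s)) / (N * (I s) ^ 2)) := by
        field_simp
        ring
      rw [hrw]
      apply mul_nonneg (Real.exp_pos _).le
      apply div_nonneg (by linarith) (by positivity)
  -- lower bound for g at t via the limit s → 0⁺
  set φ : ℝ → ℝ := fun s =>
    Real.exp (-(2 * K * s)) * (2 / N * s) - (1 - Real.exp (-(2 * K * s))) * (N * K)⁻¹
    with hφ_def
  have hφlim : Tendsto φ (nhdsWithin (0:ℝ) (Ioi 0)) (nhds 0) := by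
    have hce : Continuous (fun s : ℝ => Real.exp (-(2 * K * s))) :=
      Real.continuous_exp.comp (continuous_const.mul continuous_id).neg
    have hc : Continuous φ :=
      (hce.mul (continuous_const.mul continuous_id)).sub
        ((continuous_const.sub hce).mul continuous_const)
    have h0 : φ 0 = 0 := by simp [hφ_def]
    have := hc.tendsto 0
    rw [h0] at this
    exact this.mono_left nhdsWithin_le_nhds
  have hgt : 0 ≤ g t := by
    apply le_of_tendsto hφlim
    have hmem : Ioo (0:ℝ) t ∈ nhdsWithin (0:ℝ) (Ioi 0) :=
      Ioo_mem_nhdsGT_of_mem (Set.mem_Ico.2 ⟨le_rfl, ht0⟩)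
    filter_upwards [hmem] with s hs
    have hs' : s ∈ Ioc (0:ℝ) t := ⟨hs.1, hs.2.le⟩
    have hIs := hIpos s hs'
    have hinv := hub s hs'
    have hmul := mul_le_mul_of_nonneg_left hinv (Real.exp_pos (-(2 * K * s))).le
    have hsg : g s ≤ g t := hmono_g hs' ⟨ht0, le_rfl⟩ hs'.2
    simp only [hφ_def, hg_def] at hsg hmul ⊢
    linarith
  -- conclude
  have hEe : Real.exp (-(2 * K * t)) * Real.exp (2 * K * t) = 1 := by
    rw [← Real.exp_add]; simp
  have hIinv : I t * (I t)⁻¹ = 1 := mul_inv_cancel₀ (ne_of_gt hpos)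
  have hNK : (N * K) * (N * K)⁻¹ = 1 := mul_inv_cancel₀ (by positivity)
  rw [le_div_iff₀ (by linarith : (0:ℝ) < Real.exp (2 * K * t) - 1)]
  have hg0 : 0 ≤ Real.exp (-(2 * K * t)) * (I t)⁻¹
      - (1 - Real.exp (-(2 * K * t))) * (N * K)⁻¹ := hgt
  set e := Real.exp (-(2 * K * t)) with he_def
  set E := Real.exp (2 * K * t) with hE_def
  have h1 : (1 - e) * (N * K)⁻¹ ≤ e * (I t)⁻¹ := by linarith
  have h2 : ((1 - e) * (N * K)⁻¹) * (I t * (N * K)) ≤ (e * (I t)⁻¹) * (I t * (N * K)) :=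
    mul_le_mul_of_nonneg_right h1 (by positivity)
  have h2' : (1 - e) * I t ≤ e * (N * K) := by
    have l : ((1 - e) * (N * K)⁻¹) * (I t * (N * K)) = (1 - e) * I t * ((N * K) * (N * K)⁻¹) := by
      ring
    have r : (e * (I t)⁻¹) * (I t * (N * K)) = e * (N * K) * (I t * (I t)⁻¹) := by ring
    rw [l, r, hNK, hIinv] at h2
    linarith
  have h4 : ((1 - e) * I t) * E ≤ (e * (N * K)) * E :=
    mul_le_mul_of_nonneg_right h2' (Real.exp_pos _).le
  have l2 : ((1 - e) * I t) * E = I t * E - (e * E) * I t := by ring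
  have r2 : (e * (N * K)) * E = N * K * (e * E) := by ring
  rw [l2, r2, hEe] at h4
  nlinarith [h4]
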